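/- Let G be a group together with a central element ε ∈ G satisfying ε^2 = 1 and ε ≠ 1, such that for all g, h ∈ G either g * h = h * g or g * h = ε * (h * g). Let S be a commutative subgroup of G with ε ∉ S (a stabilizer subgroup). Then S is a normal subgroup of its normalizer N_G(S), and N_G(S) is a normal subgroup of G. -/

import Mathlib

/-- In an "anticommuting-pair group" `(G, ε)`, a stabilizer subgroup `S` (a commutative
subgroup with `ε ∉ S`) is normal in its normalizer, and its normalizer is normal in `G`. -/
theorem stabilizer_normal_in_normalizer_and_normalizer_normal {G : Type*} [Group G] (ε : G)
    (hcen : ∀ g : G, ε * g = g * ε) (hε2 : ε ^ 2 = 1) (hε1 : ε ≠ 1)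
    (hanti : ∀ g h : G, g * h = h * g ∨ g * h = ε * (h * g))
    (S : Subgroup G) (hScomm : ∀ a ∈ S, ∀ b ∈ S, a * b = b * a) (hS : ε ∉ S) :
    (S.subgroupOf (Subgroup.normalizer (S : Set G))).Normal ∧ (Subgroup.normalizer (S : Set G)).Normal := by
  have key : ∀ x : G, ε * x * ε⁻¹ = x := fun x => by rw [hcen, mul_inv_cancel_right]
  refine ⟨Subgroup.normal_in_normalizer, ⟨fun g hg k => ?_⟩⟩
  rcases hanti k g with h | h
  · have : k * g * k⁻¹ = g := by rw [h, mul_inv_cancel_right]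
    rwa [this]
  · have h1 : k * g * k⁻¹ = ε * g := by rw [h, mul_assoc, mul_assoc, mul_inv_cancel]; group
    rw [h1, Subgroup.mem_normalizer_iff]
    rw [Subgroup.mem_normalizer_iff] at hg
    intro s
    have h2 : ε * g * s * (ε * g)⁻¹ = g * s * g⁻¹ := by
      rw [mul_inv_rev, show ε * g * s * (g⁻¹ * ε⁻¹) = ε * (g * s * g⁻¹) * ε⁻¹ by group, key]
    rw [h2]
    exact hg s
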